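/- arXiv:1707.07275 — 7 statements merged into one kernel-verified Lean document; each statement's English description precedes it below -/
import Mathlib

section
/- The biased permutation likelihoods form a probability distribution: for any vector q of strictly positive reals indexed by {1,…,n}, the sum over all permutations π of {1,…,n} of ∏_{i=1}^{n} q_{π(i)} / (∑_{j=i}^{n} q_{π(j)}) equals 1. -/
open Finset

/-- Biased permutation likelihood. -/
noncomputable def L {n : ℕ} (q : Fin n → ℝ) (π : Equiv.Perm (Fin n)) : ℝ :=
  ∏ i : Fin n, q (π i) / ∑ j ∈ Finset.Ici i, q (π j)

lemma Ici_succ_eq_image {n : ℕ} (i : Fin n) :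
    Finset.Ici i.succ = (Finset.Ici i).image Fin.succ := by
  ext j
  simp only [Finset.mem_Ici, Finset.mem_image]
  constructor
  · intro h
    have hj : j ≠ 0 := by
      intro hj
      rw [hj] at h
      exact absurd h (by simp [Fin.le_def])
    obtain ⟨k, rfl⟩ := Fin.exists_succ_eq.mpr hj
    exact ⟨k, Fin.succ_le_succ_iff.mp h, rfl⟩
  · rintro ⟨k, hk, rfl⟩
    exact Fin.succ_le_succ_iff.mpr hk

lemma sum_Ici_succ {n : ℕ} (f : Fin (n + 1) → ℝ) (i : Fin n) :
    ∑ j ∈ Finset.Ici i.succ, f j = ∑ j ∈ Finset.Ici i, f j.succ := by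
  rw [Ici_succ_eq_image, Finset.sum_image]
  intro a _ b _ h
  exact Fin.succ_injective _ h

lemma L_decompose {n : ℕ} (q : Fin (n + 1) → ℝ) (p : Fin (n + 1))
    (e : Equiv.Perm (Fin n)) :
    L q (Equiv.Perm.decomposeFin.symm (p, e)) =
      q p / (∑ i, q i) * L (fun i => q (Equiv.swap 0 p i.succ)) e := by
  set π := Equiv.Perm.decomposeFin.symm (p, e) with hπ
  unfold L
  rw [Fin.prod_univ_succ]
  congr 1
  · have h0 : π 0 = p := Equiv.Perm.decomposeFin_symm_apply_zero p e
    have hIci : Finset.Ici (0 : Fin (n + 1)) = Finset.univ := by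
      ext j; simp [Fin.zero_le]
    rw [h0, hIci, Equiv.sum_comp π q]
  · apply Finset.prod_congr rfl
    intro i _
    have hsucc : ∀ x : Fin n, π x.succ = Equiv.swap 0 p (e x).succ := fun x =>
      Equiv.Perm.decomposeFin_symm_apply_succ e p x
    rw [hsucc, sum_Ici_succ]
    congr 1
    exact Finset.sum_congr rfl fun j _ => by rw [hsucc]

theorem likelihood_sums_to_one (n : ℕ) (q : Fin n → ℝ) (hq : ∀ i, 0 < q i) :
    ∑ π : Equiv.Perm (Fin n), L q π = 1 := by
  induction n with
  | zero =>
    simp [L]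
  | succ n ih =>
    have hS : 0 < ∑ i, q i := Finset.sum_pos (fun i _ => hq i) univ_nonempty
    rw [← Equiv.sum_comp (Equiv.Perm.decomposeFin.symm) (L q), Fintype.sum_prod_type]
    have : ∀ p : Fin (n + 1),
        ∑ e : Equiv.Perm (Fin n), L q (Equiv.Perm.decomposeFin.symm (p, e))
          = q p / ∑ i, q i := by
      intro p
      simp_rw [L_decompose]
      rw [← Finset.mul_sum, ih (fun i => q (Equiv.swap 0 p i.succ))
        (fun i => hq _), mul_one]
    simp_rw [this]
    rw [← Finset.sum_div, div_self (ne_of_gt hS)]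
end

section
/- Let q be a vector of strictly positive reals and σ a permutation with q_{σ(1)} ≤ ⋯ ≤ q_{σ(n)}. Then the increasing arrangement minimizes the biased permutation likelihood: for every permutation π, L(q | σ) ≤ L(q | π), where L(q | π) = ∏_{i=1}^{n} q_{π(i)} / (∑_{j=i}^{n} q_{π(j)}). -/
open Finset

lemma sum_le_sum_of_card_eq {n : ℕ} (f : Fin n → ℝ) (s t : Finset (Fin n))
    (hcard : s.card = t.card) (h : ∀ x ∈ s, ∀ y ∈ t, f x ≤ f y) :
    ∑ x ∈ s, f x ≤ ∑ y ∈ t, f y := by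
  let e := Finset.equivOfCardEq hcard
  calc ∑ x ∈ s, f x = ∑ x : s, f x.1 := (Finset.sum_coe_sort s f).symm
    _ ≤ ∑ x : s, f (e x).1 := Finset.sum_le_sum fun x _ => h x.1 x.2 (e x).1 (e x).2
    _ = ∑ y : t, f y.1 := Fintype.sum_equiv e _ _ (fun x => rfl)
    _ = ∑ y ∈ t, f y := Finset.sum_coe_sort t f

lemma sum_le_sum_Ici {n : ℕ} (f : Fin n → ℝ) (hf : Monotone f) (i : Fin n)
    (A : Finset (Fin n)) (hA : A.card = (Finset.Ici i).card) :
    ∑ j ∈ A, f j ≤ ∑ j ∈ Finset.Ici i, f j := by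
  set B := Finset.Ici i with hB
  have h1 : ∑ j ∈ A ∩ B, f j + ∑ j ∈ A \ B, f j = ∑ j ∈ A, f j :=
    Finset.sum_inter_add_sum_sdiff A B f
  have h2 : ∑ j ∈ B ∩ A, f j + ∑ j ∈ B \ A, f j = ∑ j ∈ B, f j :=
    Finset.sum_inter_add_sum_sdiff B A f
  have hcomm : A ∩ B = B ∩ A := Finset.inter_comm A B
  have hkey : ∑ j ∈ A \ B, f j ≤ ∑ j ∈ B \ A, f j := by
    apply sum_le_sum_of_card_eq f _ _ (Finset.card_sdiff_comm hA)
    intro x hx y hy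
    have hx' : x < i := by
      have := (Finset.mem_sdiff.mp hx).2
      simpa [hB, Finset.mem_Ici, not_le] using this
    have hy' : i ≤ y := by
      have := (Finset.mem_sdiff.mp hy).1
      simpa [hB, Finset.mem_Ici] using this
    exact hf (le_of_lt (lt_of_lt_of_le hx' hy'))
  rw [hcomm] at h1
  linarith

lemma tail_sum_le {n : ℕ} (q : Fin n → ℝ) (σ π : Equiv.Perm (Fin n))
    (hσ : Monotone fun j => q (σ j)) (i : Fin n) :
    ∑ j ∈ Finset.Ici i, q (π j) ≤ ∑ j ∈ Finset.Ici i, q (σ j) := by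
  have h1 : ∑ j ∈ Finset.Ici i, q (π j)
      = ∑ k ∈ (Finset.Ici i).image (fun j => σ.symm (π j)), q (σ k) := by
    rw [Finset.sum_image (fun a _ b _ hab => by
      have := congrArg σ (congrArg π.symm (congrArg σ hab))
      simpa using this)]
    simp
  rw [h1]
  apply sum_le_sum_Ici _ hσ
  rw [Finset.card_image_of_injective _ (fun a b hab => by
    have := congrArg σ (congrArg π.symm (congrArg σ hab))
    simpa using this)]

theorem increasing_minimizes_likelihood (n : ℕ) (q : Fin n → ℝ) (hq : ∀ i, 0 < q i)
    (σ : Equiv.Perm (Fin n)) (hσ : Monotone fun j => q (σ j))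
    (π : Equiv.Perm (Fin n)) :
    L q σ ≤ L q π := by
  have hpos : ∀ (τ : Equiv.Perm (Fin n)) (i : Fin n),
      0 < ∑ j ∈ Finset.Ici i, q (τ j) := by
    intro τ i
    apply Finset.sum_pos (fun j _ => hq _)
    exact ⟨i, Finset.mem_Ici.mpr le_rfl⟩
  have hnum : ∏ i, q (σ i) = ∏ i, q (π i) := by
    rw [Equiv.prod_comp σ q, Equiv.prod_comp π q]
  have hden : ∏ i, ∑ j ∈ Finset.Ici i, q (π j) ≤ ∏ i, ∑ j ∈ Finset.Ici i, q (σ j) :=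
    Finset.prod_le_prod (fun i _ => (hpos π i).le) (fun i _ => tail_sum_le q σ π hσ i)
  have hdenpos : 0 < ∏ i, ∑ j ∈ Finset.Ici i, q (π j) :=
    Finset.prod_pos (fun i _ => hpos π i)
  unfold L
  rw [Finset.prod_div_distrib, Finset.prod_div_distrib, hnum]
  apply div_le_div_of_nonneg_left _ hdenpos hden
  exact Finset.prod_nonneg (fun i _ => (hq (π i)).le)
end

section
/- Let q be a vector of strictly positive reals and σ a permutation with q_{σ(1)} ≤ ⋯ ≤ q_{σ(n)}. Then the decreasing arrangement σ' defined by σ'(i) = σ(n+1−i) maximizes the biased permutation likelihood: for every permutation π, L(q | π) ≤ L(q | σ'), where L(q | π) = ∏_{i=1}^{n} q_{π(i)} / (∑_{j=i}^{n} q_{π(j)}). -/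
open Finset

lemma strictMono_le_apply {c n : ℕ} {f : Fin c → Fin n} (hf : StrictMono f)
    (k : Fin c) : (k : ℕ) ≤ (f k : ℕ) := by
  obtain ⟨k, hk⟩ := k
  induction k with
  | zero => exact Nat.zero_le _
  | succ m ih =>
    have h1 := ih (Nat.lt_of_succ_lt hk)
    have h2 : f ⟨m, Nat.lt_of_succ_lt hk⟩ < f ⟨m + 1, hk⟩ := by
      apply hf; simp [Fin.lt_def]
    have h3 := Fin.lt_def.mp h2
    simp only [Fin.val_mk] at h1 h3 ⊢
    omega

lemma sum_smallest_le {n : ℕ} (v : Fin n → ℝ) (hv : Monotone v)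
    (C : Finset (Fin n)) (c : ℕ) (hc : C.card = c) (hcn : c ≤ n) :
    ∑ k : Fin c, v (Fin.castLE hcn k) ≤ ∑ m ∈ C, v m := by
  have hsum : ∑ m ∈ C, v m = ∑ k : Fin c, v (C.orderEmbOfFin hc k) := by
    refine (Finset.sum_bij (fun k _ => C.orderEmbOfFin hc k) ?_ ?_ ?_ ?_).symm
    · intro k _; exact C.orderEmbOfFin_mem hc k
    · intro a _ b _ h; exact (C.orderEmbOfFin hc).injective h
    · intro m hm
      have : m ∈ Set.range (C.orderEmbOfFin hc) := by
        rw [Finset.range_orderEmbOfFin]; exact hm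
      obtain ⟨k, hk⟩ := this
      exact ⟨k, Finset.mem_univ _, hk⟩
    · intro k _; rfl
  rw [hsum]
  apply Finset.sum_le_sum
  intro k _
  apply hv
  have := strictMono_le_apply (C.orderEmbOfFin hc).strictMono k
  exact Fin.le_def.mpr (by simpa using this)

theorem decreasing_maximizes_likelihood (n : ℕ) (q : Fin n → ℝ) (hq : ∀ i, 0 < q i)
    (σ : Equiv.Perm (Fin n)) (hσ : Monotone fun j => q (σ j))
    (π : Equiv.Perm (Fin n)) :
    L q π ≤ L q (Fin.revPerm.trans σ) := by
  set σ' := Fin.revPerm.trans σ with hσ'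
  -- positivity of tail sums
  have hpos : ∀ (τ : Equiv.Perm (Fin n)) (i : Fin n),
      0 < ∑ j ∈ Finset.Ici i, q (τ j) := by
    intro τ i
    apply Finset.sum_pos (fun j _ => hq _)
    exact ⟨i, Finset.mem_Ici.mpr le_rfl⟩
  -- key pointwise inequality on denominators
  have key : ∀ i : Fin n,
      ∑ j ∈ Finset.Ici i, q (σ' j) ≤ ∑ j ∈ Finset.Ici i, q (π j) := by
    intro i
    set v : Fin n → ℝ := fun j => q (σ j) with hv
    set c : ℕ := n - (i : ℕ) with hcdef
    have hcn : c ≤ n := Nat.sub_le _ _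
    -- LHS equals sum of c smallest values of v
    have hL : ∑ j ∈ Finset.Ici i, q (σ' j) = ∑ k : Fin c, v (Fin.castLE hcn k) := by
      refine Finset.sum_bij' (fun j hj => (⟨n - 1 - (j : ℕ), by
          have h1 := i.isLt
          have h2 := Fin.le_def.mp (Finset.mem_Ici.mp hj)
          omega⟩ : Fin c))
        (fun k _ => (⟨n - 1 - ((Fin.castLE hcn k : Fin n) : ℕ), by
          have := i.isLt; omega⟩ : Fin n))
        ?_ ?_ ?_ ?_ ?_
      · intro j _; exact Finset.mem_univ _
      · intro k _
        have hi := i.isLt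
        have hk := k.isLt
        simp only [Finset.mem_Ici, Fin.le_def, Fin.castLE]
        simp only [hcdef] at hk
        omega
      · intro j hj
        have hj' := Finset.mem_Ici.mp hj
        have := j.isLt
        ext
        simp only [Fin.castLE]
        omega
      · intro k _
        have hk := k.isLt
        simp only [hcdef] at hk
        ext
        simp only [Fin.castLE]
        omega
      · intro j hj
        have := j.isLt
        simp only [hσ', Equiv.trans_apply, Fin.revPerm_apply, hv]
        congr 2
        ext
        simp [Fin.rev, Fin.castLE]
        omega
    -- RHS is the sum of v over a set of cardinality c
    set C : Finset (Fin n) := (Finset.Ici i).image (fun j => σ⁻¹ (π j)) with hC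
    have hinj : Set.InjOn (fun j => σ⁻¹ (π j)) (Finset.Ici i) :=
      fun a _ b _ h => π.injective (σ⁻¹.injective h)
    have hcard : C.card = c := by
      rw [hC, Finset.card_image_of_injOn hinj, Fin.card_Ici]
    have hR : ∑ j ∈ Finset.Ici i, q (π j) = ∑ m ∈ C, v m := by
      rw [hC, Finset.sum_image (fun a ha b hb h => hinj ha hb h)]
      apply Finset.sum_congr rfl
      intro j _
      simp [hv]
    rw [hL, hR]
    exact sum_smallest_le v hσ C c hcard hcn
  -- rewrite L as quotient of products
  have hform : ∀ τ : Equiv.Perm (Fin n),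
      L q τ = (∏ i : Fin n, q i) / ∏ i : Fin n, ∑ j ∈ Finset.Ici i, q (τ j) := by
    intro τ
    rw [L, Finset.prod_div_distrib, Equiv.prod_comp τ q]
  rw [hform, hform]
  apply div_le_div_of_nonneg_left ?_ ?_ ?_
  · exact le_of_lt (Finset.prod_pos (fun i _ => hq i))
  · exact Finset.prod_pos (fun i _ => hpos σ' i)
  · exact Finset.prod_le_prod (fun i _ => le_of_lt (hpos σ' i)) (fun i _ => key i)
end

section
/- Define recursively g_π(u, k) for u ∈ (0,1] and k ∈ {1,…,n} by g_π(u, n) = ∫_0^u q_{π(n)} v^{q_{π(n)}−1} dv and g_π(u, k) = ∫_0^u q_{π(k)} v^{q_{π(k)}−1} g_π(v, k+1) dv for k < n, where q_{π(i)} > 0 for all i. Then g_π(u, k) = ∏_{i=k}^{n} (q_{π(i)} · u^{q_{π(i)}}) / (∑_{j=i}^{n} q_{π(j)}). In particular, g_π(1, 1) = ∏_{i=1}^{n} q_{π(i)} / (∑_{j=i}^{n} q_{π(j)}). -/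
open Finset MeasureTheory

private lemma int_rpow_Ioo (u p : ℝ) (hu : 0 < u) (hp : 0 < p) :
    ∫ v in Set.Ioo (0:ℝ) u, v ^ (p - 1) = u ^ p / p := by
  rw [← MeasureTheory.integral_Ioc_eq_integral_Ioo,
    ← intervalIntegral.integral_of_le hu.le,
    integral_rpow (Or.inl (by linarith)), sub_add_cancel]
  rw [Real.zero_rpow hp.ne', sub_zero]

private lemma Ici_castSucc {n : ℕ} (k : Fin n) :
    Finset.Ici k.castSucc = insert k.castSucc (Finset.Ici k.succ) := by
  ext i
  simp only [mem_Ici, mem_insert]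
  constructor
  · intro h
    rcases eq_or_lt_of_le h with h | h
    · exact Or.inl h.symm
    · exact Or.inr (Fin.castSucc_lt_iff_succ_le.mp h)
  · rintro (rfl | h)
    · exact le_refl _
    · exact le_trans (Fin.castSucc_le_succ k) h

theorem iterated_integral_formula (n : ℕ) (q : Fin (n + 1) → ℝ) (hq : ∀ i, 0 < q i)
    (π : Equiv.Perm (Fin (n + 1))) (g : ℝ → Fin (n + 1) → ℝ)
    (hlast : ∀ u ∈ Set.Ioc (0 : ℝ) 1,
      g u (Fin.last n) =
        ∫ v in Set.Ioo (0 : ℝ) u, q (π (Fin.last n)) * v ^ (q (π (Fin.last n)) - 1))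
    (hrec : ∀ u ∈ Set.Ioc (0 : ℝ) 1, ∀ k : Fin n,
      g u k.castSucc =
        ∫ v in Set.Ioo (0 : ℝ) u,
          q (π k.castSucc) * v ^ (q (π k.castSucc) - 1) * g v k.succ) :
    (∀ u ∈ Set.Ioc (0 : ℝ) 1, ∀ k : Fin (n + 1),
        g u k = ∏ i ∈ Finset.Ici k, q (π i) * u ^ q (π i) / ∑ j ∈ Finset.Ici i, q (π j)) ∧
      g 1 0 = ∏ i : Fin (n + 1), q (π i) / ∑ j ∈ Finset.Ici i, q (π j) := by
  set S : Fin (n + 1) → ℝ := fun i => ∑ j ∈ Finset.Ici i, q (π j) with hS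
  have hSpos : ∀ i, 0 < S i := fun i =>
    Finset.sum_pos (fun j _ => hq (π j)) ⟨i, mem_Ici.mpr le_rfl⟩
  -- product formula rewrite
  have hprod : ∀ (k : Fin (n + 1)) (u : ℝ), 0 < u →
      (∏ i ∈ Finset.Ici k, q (π i) * u ^ q (π i) / S i)
        = (∏ i ∈ Finset.Ici k, q (π i) / S i) * u ^ S k := by
    intro k u hu
    rw [hS, Real.rpow_sum_of_pos hu, ← Finset.prod_mul_distrib]
    exact Finset.prod_congr rfl fun i _ => by ring
  have main : ∀ k : Fin (n + 1), ∀ u ∈ Set.Ioc (0 : ℝ) 1,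
      g u k = ∏ i ∈ Finset.Ici k, q (π i) * u ^ q (π i) / S i := by
    intro k
    induction k using Fin.reverseInduction with
    | last =>
      intro u hu
      have hIci : Finset.Ici (Fin.last n) = {Fin.last n} := by
        ext i; simp [Fin.last_le_iff, eq_comm]
      have hSl : S (Fin.last n) = q (π (Fin.last n)) := by
        simp only [hS, hIci, Finset.sum_singleton]
      rw [hlast u hu, MeasureTheory.integral_const_mul,
        int_rpow_Ioo u _ hu.1 (hq _), hIci, Finset.prod_singleton, hSl]
      ring
    | cast k ih =>
      intro u hu
      rw [hrec u hu k]
      have hcongr : ∫ v in Set.Ioo (0 : ℝ) u,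
          q (π k.castSucc) * v ^ (q (π k.castSucc) - 1) * g v k.succ
          = ∫ v in Set.Ioo (0 : ℝ) u,
            (q (π k.castSucc) * (∏ i ∈ Finset.Ici k.succ, q (π i) / S i)) *
              v ^ (q (π k.castSucc) + S k.succ - 1) := by
        apply MeasureTheory.setIntegral_congr_fun measurableSet_Ioo
        intro v hv
        have hv0 : 0 < v := hv.1
        dsimp only
        have hv1 : v ∈ Set.Ioc (0 : ℝ) 1 := ⟨hv.1, le_trans hv.2.le hu.2⟩
        rw [ih v hv1, hprod k.succ v hv0]
        rw [show q (π k.castSucc) + S k.succ - 1 = (q (π k.castSucc) - 1) + S k.succ by ring,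
          Real.rpow_add hv0]
        ring
      rw [hcongr, MeasureTheory.integral_const_mul,
        int_rpow_Ioo u _ hu.1 (by have := hq (π k.castSucc); have := hSpos k.succ; linarith)]
      have hSk : S k.castSucc = q (π k.castSucc) + S k.succ := by
        simp only [hS, Ici_castSucc k]
        rw [Finset.sum_insert (by simp [mem_Ici, Fin.castSucc_lt_succ_iff])]
      rw [Ici_castSucc k, Finset.prod_insert (by
        simp [mem_Ici, Fin.castSucc_lt_succ_iff])]
      rw [hprod k.succ u hu.1, hSk, Real.rpow_add hu.1]
      have h1 := (hq (π k.castSucc)).ne'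
      have h2 := (hSpos k.succ).ne'
      field_simp
  refine ⟨fun u hu k => main k u hu, ?_⟩
  rw [main 0 1 ⟨zero_lt_one, le_rfl⟩]
  exact Finset.prod_congr (by ext i; simp [Fin.zero_le]) fun i _ => by
    rw [Real.one_rpow, mul_one]
end

section
/- For strictly positive reals q_1, …, q_n and n independent random variables X_1, …, X_n where X_i is exponentially distributed with rate q_i, the probability of the ordering event {X_{π(1)} < X_{π(2)} < ⋯ < X_{π(n)}} equals ∏_{i=1}^{n} q_{π(i)} / (∑_{j=i}^{n} q_{π(j)}) for every permutation π of {1,…,n}. -/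
open Finset MeasureTheory ProbabilityTheory

section Aux

open Set Real

lemma aux_measurableSet_strictMono (n : ℕ) :
    MeasurableSet {x : Fin n → ℝ | StrictMono x} := by
  have h : {x : Fin n → ℝ | StrictMono x}
      = ⋂ (i : Fin n) (j : Fin n) (_ : i < j), {x : Fin n → ℝ | x i < x j} := by
    ext x
    simp only [Set.mem_setOf_eq, Set.mem_iInter, StrictMono]
  rw [h]
  exact MeasurableSet.iInter fun i => MeasurableSet.iInter fun j => MeasurableSet.iInter fun _ =>
    measurableSet_lt (measurable_pi_apply i) (measurable_pi_apply j)

lemma aux_integral_exp_neg_mul_Ioi (a : ℝ) {b : ℝ} (hb : 0 < b) :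
    ∫ x in Ioi a, rexp (-(b * x)) = rexp (-(b * a)) / b := by
  have h := integral_comp_mul_left_Ioi (fun x => rexp (-x)) a hb
  simp only [smul_eq_mul] at h
  rw [h, integral_exp_neg_Ioi]
  ring

lemma aux_expMeasure_neg_null {r : ℝ} : expMeasure r (Iio 0) = 0 := by
  show (volume.withDensity (exponentialPDF r)) (Iio 0) = 0
  rw [withDensity_apply _ measurableSet_Iio]
  exact lintegral_exponentialPDF_of_nonpos le_rfl

lemma aux_lintegral_exp_tilt_Ioi {r : ℝ} (hr : 0 < r) {s : ℝ} (hs : 0 ≤ s) {a : ℝ} (ha : 0 ≤ a) :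
    ∫⁻ t, (Ioi a).indicator (fun t => ENNReal.ofReal (rexp (-(s * t)))) t ∂(expMeasure r)
      = ENNReal.ofReal (r / (r + s) * rexp (-((r + s) * a))) := by
  have hrs : 0 < r + s := by linarith
  have hmf : Measurable fun t : ℝ => (Ioi a).indicator (fun t => ENNReal.ofReal (rexp (-(s * t)))) t :=
    Measurable.indicator ((Real.measurable_exp.comp (measurable_id.const_mul s).neg).ennreal_ofReal)
      measurableSet_Ioi
  have hpdf : Measurable (exponentialPDF r) := (measurable_exponentialPDFReal r).ennreal_ofReal
  show ∫⁻ t, (Ioi a).indicator _ t ∂(volume.withDensity (exponentialPDF r)) = _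
  rw [lintegral_withDensity_eq_lintegral_mul _ hpdf hmf]
  have hpt : (fun t => exponentialPDF r t * (Ioi a).indicator (fun t => ENNReal.ofReal (rexp (-(s * t)))) t)
      = (Ioi a).indicator (fun t => ENNReal.ofReal (r * rexp (-((r + s) * t)))) := by
    funext t
    by_cases ht : t ∈ Ioi a
    · have ht0 : (0:ℝ) ≤ t := le_trans ha (le_of_lt ht)
      rw [Set.indicator_of_mem ht, Set.indicator_of_mem ht,
        exponentialPDF_of_nonneg ht0, ← ENNReal.ofReal_mul (by positivity)]
      congr 1
      rw [mul_assoc, ← Real.exp_add]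
      ring_nf
    · rw [Set.indicator_of_notMem ht, Set.indicator_of_notMem ht, mul_zero]
  simp only [Pi.mul_apply]
  rw [hpt, lintegral_indicator measurableSet_Ioi]
  have hint : IntegrableOn (fun t : ℝ => r * rexp (-((r + s) * t))) (Ioi a) := by
    have h := (exp_neg_integrableOn_Ioi a hrs).const_mul r
    simpa only [neg_mul, IntegrableOn] using h
  rw [← ofReal_integral_eq_lintegral_ofReal hint
    (Filter.Eventually.of_forall fun t => by positivity)]
  congr 1
  rw [MeasureTheory.integral_const_mul, aux_integral_exp_neg_mul_Ioi a hrs]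
  field_simp

lemma aux_lintegral_exp_tilt {r : ℝ} (hr : 0 < r) {s : ℝ} (hs : 0 ≤ s) :
    ∫⁻ t, ENNReal.ofReal (rexp (-(s * t))) ∂(expMeasure r) = ENNReal.ofReal (r / (r + s)) := by
  have hnull : expMeasure r (Iic 0) = 0 := by
    show (volume.withDensity (exponentialPDF r)) (Iic 0) = 0
    rw [withDensity_apply _ measurableSet_Iic, lintegral_exponentialPDF_eq_antiDeriv hr 0]
    simp
  have h2 : ∀ᵐ t ∂expMeasure r, 0 < t := by
    rw [ae_iff]
    convert hnull using 2
    ext t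
    simp
  have hae : (fun t => ENNReal.ofReal (rexp (-(s * t))))
      =ᵐ[expMeasure r] fun t => (Set.Ioi (0:ℝ)).indicator (fun t => ENNReal.ofReal (rexp (-(s * t)))) t := by
    filter_upwards [h2] with t ht
    rw [Set.indicator_of_mem (Set.mem_Ioi.2 ht)]
  rw [lintegral_congr_ae hae, aux_lintegral_exp_tilt_Ioi hr hs le_rfl]
  simp

lemma aux_strictMono_snoc_iff {n : ℕ} (y : Fin (n + 1) → ℝ) (t : ℝ) :
    StrictMono (Fin.snoc y t : Fin (n + 2) → ℝ) ↔ StrictMono y ∧ y (Fin.last n) < t := by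
  rw [Fin.strictMono_iff_lt_succ, Fin.strictMono_iff_lt_succ]
  constructor
  · intro h
    refine ⟨fun i => ?_, ?_⟩
    · have := h i.castSucc
      rw [Fin.succ_castSucc, Fin.snoc_castSucc, Fin.snoc_castSucc] at this; exact this
    · have := h (Fin.last n)
      simpa [Fin.snoc_castSucc, Fin.succ_last, Fin.snoc_last] using this
  · rintro ⟨h1, h2⟩ i
    induction i using Fin.lastCases with
    | last => simpa [Fin.snoc_castSucc, Fin.succ_last, Fin.snoc_last] using h2
    | cast j =>
      have := h1 j
      rw [Fin.succ_castSucc, Fin.snoc_castSucc, Fin.snoc_castSucc]; exact this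

lemma aux_Ici_last {n : ℕ} : Finset.Ici (Fin.last n) = {Fin.last n} := by
  ext j
  simp [Fin.last_le_iff]

lemma aux_Ici_castSucc {n : ℕ} (i : Fin (n + 1)) :
    Finset.Ici (Fin.castSucc i : Fin (n + 2))
      = insert (Fin.last (n + 1)) ((Finset.Ici i).map Fin.castSuccEmb) := by
  ext j
  simp only [Finset.mem_Ici, Finset.mem_insert, Finset.mem_map, Fin.castSuccEmb]
  constructor
  · intro hij
    induction j using Fin.lastCases with
    | last => exact Or.inl rfl
    | cast j' =>
      exact Or.inr ⟨j', by simpa [Fin.castSucc_le_castSucc_iff] using hij, rfl⟩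
  · rintro (rfl | ⟨k, hk, rfl⟩)
    · exact Fin.le_last _
    · exact Fin.castSucc_le_castSucc_iff.2 hk

lemma aux_sum_Ici_castSucc {n : ℕ} (r : Fin (n + 2) → ℝ) (i : Fin (n + 1)) :
    ∑ j ∈ Finset.Ici (Fin.castSucc i : Fin (n + 2)), r j
      = r (Fin.last (n + 1)) + ∑ j ∈ Finset.Ici i, r (Fin.castSucc j) := by
  rw [aux_Ici_castSucc, Finset.sum_insert, Finset.sum_map]
  · rfl
  · simp only [Finset.mem_map, Fin.castSuccEmb]
    rintro ⟨k, -, hk⟩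
    exact (Fin.castSucc_lt_last k).ne hk

end Aux
section Key

open Set Real

lemma aux_key (n : ℕ) (r : Fin (n + 1) → ℝ) (hr : ∀ i, 0 < r i) (s : ℝ) (hs : 0 ≤ s) :
    ∫⁻ x, {x : Fin (n + 1) → ℝ | StrictMono x}.indicator
        (fun x => ENNReal.ofReal (rexp (-(s * x (Fin.last n))))) x
      ∂(Measure.pi fun i => expMeasure (r i))
    = ∏ i : Fin (n + 1), ENNReal.ofReal (r i / (s + ∑ j ∈ Finset.Ici i, r j)) := by
  induction n generalizing s with
  | zero =>
    haveI : ∀ i : Fin 1, IsProbabilityMeasure (expMeasure (r i)) :=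
      fun i => isProbabilityMeasure_expMeasure (hr i)
    have hS : {x : Fin 1 → ℝ | StrictMono x} = Set.univ :=
      Set.eq_univ_of_forall fun x => Subsingleton.strictMono x
    rw [hS, Set.indicator_univ]
    have hmeq : (fun i : Fin 1 => expMeasure (r i)) = fun _ => expMeasure (r 0) := by
      funext i
      rw [Subsingleton.elim i 0]
    rw [hmeq]
    have hmp := MeasureTheory.measurePreserving_funUnique (expMeasure (r 0)) (Fin 1)
    have hg : Measurable fun t : ℝ => ENNReal.ofReal (rexp (-(s * t))) :=
      (Real.measurable_exp.comp (measurable_id.const_mul s).neg).ennreal_ofReal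
    have := hmp.lintegral_comp hg
    rw [show (∫⁻ x : Fin 1 → ℝ, ENNReal.ofReal (rexp (-(s * x (Fin.last 0))))
          ∂(Measure.pi fun _ => expMeasure (r 0)))
        = ∫⁻ x : Fin 1 → ℝ, (fun t => ENNReal.ofReal (rexp (-(s * t))))
            ((MeasurableEquiv.funUnique (Fin 1) ℝ) x) ∂(Measure.pi fun _ => expMeasure (r 0))
        from rfl]
    refine this.trans ?_
    rw [aux_lintegral_exp_tilt (hr 0) hs]
    have h01 : Finset.Ici (0 : Fin 1) = {0} := by decide
    rw [Fin.prod_univ_one, h01, Finset.sum_singleton, add_comm s (r 0)]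
  | succ n ih =>
    haveI : ∀ i : Fin (n + 2), IsProbabilityMeasure (expMeasure (r i)) :=
      fun i => isProbabilityMeasure_expMeasure (hr i)
    set L := Fin.last (n + 1) with hL
    set S := {x : Fin (n + 2) → ℝ | StrictMono x} with hSdef
    set F := S.indicator (fun x => ENNReal.ofReal (rexp (-(s * x L)))) with hF
    have hFm : Measurable F :=
      Measurable.indicator
        ((Real.measurable_exp.comp (by fun_prop : Measurable fun x : Fin (n + 2) → ℝ => -(s * x L))).ennreal_ofReal)
        (aux_measurableSet_strictMono _)
    have mp := (measurePreserving_piFinSuccAbove (fun i => expMeasure (r i)) L).symm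
    rw [← mp.lintegral_comp hFm]
    have hint : ∀ p : ℝ × (Fin (n + 1) → ℝ),
        (MeasurableEquiv.piFinSuccAbove (fun _ => ℝ) L).symm p = Fin.snoc p.2 p.1 := by
      intro p
      rw [show (MeasurableEquiv.piFinSuccAbove (fun _ => ℝ) L).symm p
          = L.insertNth p.1 p.2 from rfl]
      exact Fin.insertNth_last' p.1 p.2
    rw [lintegral_prod_symm (fun a => F ((MeasurableEquiv.piFinSuccAbove (fun _ => ℝ) L).symm a))
      ((hFm.comp (MeasurableEquiv.piFinSuccAbove (fun _ => ℝ) L).symm.measurable).aemeasurable)]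
    have hrw1 : ∀ (t : ℝ) (y : Fin (n + 1) → ℝ),
        F ((MeasurableEquiv.piFinSuccAbove (fun _ => ℝ) L).symm (t, y))
          = Set.indicator {y : Fin (n + 1) → ℝ | StrictMono y}
              (fun y' => (Set.Ioi (y' (Fin.last n))).indicator
                (fun u => ENNReal.ofReal (rexp (-(s * u)))) t) y := by
      intro t y
      rw [hint (t, y)]
      by_cases hy : StrictMono y
      · by_cases ht : y (Fin.last n) < t
        · simp [hF, Set.indicator_apply, hSdef, aux_strictMono_snoc_iff, hL, Fin.snoc_last, hy, ht]
        · simp [hF, Set.indicator_apply, hSdef, aux_strictMono_snoc_iff, hL, Fin.snoc_last, hy, ht]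
      · simp [hF, Set.indicator_apply, hSdef, aux_strictMono_snoc_iff, hL, Fin.snoc_last, hy]
    simp only [hrw1]
    have hrw2 : ∀ y : Fin (n + 1) → ℝ,
        (∫⁻ t, Set.indicator {y : Fin (n + 1) → ℝ | StrictMono y}
            (fun y' => (Set.Ioi (y' (Fin.last n))).indicator
              (fun u => ENNReal.ofReal (rexp (-(s * u)))) t) y ∂(expMeasure (r L)))
          = Set.indicator {y : Fin (n + 1) → ℝ | StrictMono y}
              (fun y' => ∫⁻ t, (Set.Ioi (y' (Fin.last n))).indicator
                (fun u => ENNReal.ofReal (rexp (-(s * u)))) t ∂(expMeasure (r L))) y := by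
      intro y
      by_cases hy : StrictMono y
      · simp only [Set.indicator_of_mem (show y ∈ {y : Fin (n+1) → ℝ | StrictMono y} from hy)]
      · simp only [Set.indicator_of_notMem (show y ∉ {y : Fin (n+1) → ℝ | StrictMono y} from hy),
          lintegral_zero]
    rw [lintegral_congr hrw2]
    have h0 : ∀ᵐ y ∂(Measure.pi fun j => expMeasure (r (L.succAbove j))), 0 ≤ y (Fin.last n) := by
      rw [ae_iff]
      refine measure_mono_null (fun y hy => ?_)
        (Measure.pi_eval_preimage_null (fun j => expMeasure (r (L.succAbove j)))
          (i := Fin.last n) (s := Set.Iio 0) aux_expMeasure_neg_null)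
      simpa using hy
    have hrL : 0 < r L := hr L
    have hcnn : (0:ℝ) ≤ r L / (r L + s) := by positivity
    have hae2 : (fun y : Fin (n + 1) → ℝ =>
          Set.indicator {y : Fin (n + 1) → ℝ | StrictMono y}
            (fun y' => ∫⁻ t, (Set.Ioi (y' (Fin.last n))).indicator
              (fun u => ENNReal.ofReal (rexp (-(s * u)))) t ∂(expMeasure (r L))) y)
        =ᵐ[Measure.pi fun j => expMeasure (r (L.succAbove j))]
        (fun y => ENNReal.ofReal (r L / (r L + s)) *
          Set.indicator {y : Fin (n + 1) → ℝ | StrictMono y}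
            (fun y' => ENNReal.ofReal (rexp (-((s + r L) * y' (Fin.last n))))) y) := by
      filter_upwards [h0] with y hy0
      by_cases hy : StrictMono y
      · rw [Set.indicator_of_mem (show y ∈ {y : Fin (n+1) → ℝ | StrictMono y} from hy),
          Set.indicator_of_mem (show y ∈ {y : Fin (n+1) → ℝ | StrictMono y} from hy),
          aux_lintegral_exp_tilt_Ioi hrL hs hy0, ENNReal.ofReal_mul hcnn]
        congr 3
        ring
      · rw [Set.indicator_of_notMem (show y ∉ {y : Fin (n+1) → ℝ | StrictMono y} from hy),
          Set.indicator_of_notMem (show y ∉ {y : Fin (n+1) → ℝ | StrictMono y} from hy),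
          mul_zero]
    rw [lintegral_congr_ae hae2, lintegral_const_mul _ ?hm]
    case hm =>
      exact Measurable.indicator
        ((Real.measurable_exp.comp
          ((measurable_pi_apply (Fin.last n)).const_mul _).neg).ennreal_ofReal)
        (aux_measurableSet_strictMono _)
    rw [ih (fun j => r (L.succAbove j)) (fun j => hr _) (s + r L) (by positivity)]
    rw [Fin.prod_univ_castSucc
      (fun i : Fin (n + 2) => ENNReal.ofReal (r i / (s + ∑ j ∈ Finset.Ici i, r j))), mul_comm]
    congr 1
    · refine Finset.prod_congr rfl fun i _ => ?_
      simp only [hL, Fin.succAbove_last]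
      rw [aux_sum_Ici_castSucc]
      congr 1
      ring
    · rw [hL, aux_Ici_last, Finset.sum_singleton, add_comm s (r (Fin.last (n + 1)))]

end Key
theorem exp_order_probability (n : ℕ) {Ω : Type*} [MeasureSpace Ω]
    (P : Measure Ω) [IsProbabilityMeasure P]
    (q : Fin n → ℝ) (hq : ∀ i, 0 < q i)
    (X : Fin n → Ω → ℝ) (hXm : ∀ i, Measurable (X i))
    (hindep : iIndepFun X P)
    (hdist : ∀ i, Measure.map (X i) P = expMeasure (q i))
    (π : Equiv.Perm (Fin n)) :
    (P {ω | StrictMono fun i => X (π i) ω}).toReal =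
      ∏ i : Fin n, q (π i) / ∑ j ∈ Finset.Ici i, q (π j) := by
  rcases n with _ | m
  · have h1 : {ω : Ω | StrictMono fun i : Fin 0 => X (π i) ω} = Set.univ :=
      Set.eq_univ_of_forall fun ω => Subsingleton.strictMono _
    simp [h1]
  · haveI : ∀ i : Fin (m + 1), IsProbabilityMeasure (expMeasure (q i)) :=
      fun i => isProbabilityMeasure_expMeasure (hq i)
    have hJm : Measurable (fun ω (i : Fin (m + 1)) => X i ω) :=
      measurable_pi_lambda _ hXm
    -- joint law is the product measure
    have hjoint : Measure.map (fun ω i => X i ω) P = Measure.pi fun i => expMeasure (q i) := by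
      refine (Measure.pi_eq fun s hs => ?_).symm
      rw [Measure.map_apply hJm (MeasurableSet.univ_pi hs)]
      have hpre : (fun ω (i : Fin (m + 1)) => X i ω) ⁻¹' Set.pi Set.univ s
          = ⋂ i, X i ⁻¹' s i := by
        ext ω; simp [Set.mem_pi]
      rw [hpre, hindep.meas_iInter fun i => ⟨s i, hs i, rfl⟩]
      exact Finset.prod_congr rfl fun i _ => by
        rw [← Measure.map_apply (hXm i) (hs i), hdist i]
    -- the event as preimage of a measurable set
    set T : Set (Fin (m + 1) → ℝ) := {x | StrictMono fun i => x (π i)} with hT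
    have hTm : MeasurableSet T := by
      have : T = (fun (x : Fin (m + 1) → ℝ) (i : Fin (m + 1)) => x (π i)) ⁻¹'
          {x : Fin (m + 1) → ℝ | StrictMono x} := rfl
      rw [this]
      exact (measurable_pi_lambda _ fun i => measurable_pi_apply (π i))
        (aux_measurableSet_strictMono _)
    have hev : P {ω | StrictMono fun i => X (π i) ω}
        = (Measure.pi fun i => expMeasure (q i)) T := by
      rw [← hjoint, Measure.map_apply hJm hTm]
      rfl
    -- permutation invariance
    have hperm : (Measure.pi fun i => expMeasure (q i)) T
        = (Measure.pi fun i => expMeasure (q (π i))) {x : Fin (m + 1) → ℝ | StrictMono x} := by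
      have mp := measurePreserving_piCongrLeft (fun i => expMeasure (q i)) π
      have hpre : (MeasurableEquiv.piCongrLeft (fun _ : Fin (m + 1) => ℝ) π) ⁻¹' T
          = {x : Fin (m + 1) → ℝ | StrictMono x} := by
        ext x
        have hfun : (fun i => (Equiv.piCongrLeft (fun _ : Fin (m + 1) => ℝ) π) x (π i)) = x := by
          funext i
          exact Equiv.piCongrLeft_apply_apply (fun _ : Fin (m + 1) => ℝ) π x i
        simp only [Set.mem_preimage, hT, Set.mem_setOf_eq,
          MeasurableEquiv.coe_piCongrLeft, hfun]
      calc (Measure.pi fun i => expMeasure (q i)) T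
          = (Measure.pi fun i => expMeasure (q (π i)))
            ((MeasurableEquiv.piCongrLeft (fun _ : Fin (m + 1) => ℝ) π) ⁻¹' T) := by
            rw [mp.measure_preimage hTm.nullMeasurableSet]
        _ = _ := by rw [hpre]
    -- apply the key computation with s = 0
    have hkey := aux_key m (fun i => q (π i)) (fun i => hq _) 0 le_rfl
    have hone : {x : Fin (m + 1) → ℝ | StrictMono x}.indicator
        (fun x => ENNReal.ofReal (Real.exp (-(0 * x (Fin.last m)))))
        = {x : Fin (m + 1) → ℝ | StrictMono x}.indicator 1 := by
      funext x
      simp [Set.indicator_apply]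
    rw [hone] at hkey
    rw [lintegral_indicator_one (aux_measurableSet_strictMono _)] at hkey
    rw [hev, hperm, hkey]
    rw [ENNReal.toReal_prod]
    refine Finset.prod_congr rfl fun i _ => ?_
    rw [zero_add, ENNReal.toReal_ofReal]
    have hpos : 0 < ∑ j ∈ Finset.Ici i, q (π j) :=
      Finset.sum_pos (fun j _ => hq _) ⟨i, Finset.mem_Ici.2 le_rfl⟩
    exact div_nonneg (hq _).le hpos.le
end

section
/- Exchanging two adjacent entries in a permutation changes the biased likelihood monotonically with the preference values: if π' is obtained from π by swapping positions k and k+1, then L(q | π') ≥ L(q | π) if and only if q_{π(k+1)} ≥ q_{π(k)} (with L as the biased permutation likelihood and all q_i > 0). -/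
open Finset

theorem adjacent_swap_monotone (n : ℕ) (q : Fin n → ℝ) (hq : ∀ i, 0 < q i)
    (π : Equiv.Perm (Fin n)) (k : Fin n) (h : (k : ℕ) + 1 < n) :
    L q π ≤ L q (π * Equiv.swap k ⟨(k : ℕ) + 1, h⟩) ↔
      q (π k) ≤ q (π ⟨(k : ℕ) + 1, h⟩) := by
  set k' : Fin n := ⟨(k : ℕ) + 1, h⟩ with hk'def
  set σ : Equiv.Perm (Fin n) := Equiv.swap k k' with hσdef
  have hkk' : k < k' := by simp [Fin.lt_def, hk'def]
  have hkne : k ≠ k' := ne_of_lt hkk'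
  have hS : ∀ (ρ : Equiv.Perm (Fin n)) (i : Fin n), 0 < ∑ j ∈ Ici i, q (ρ j) := by
    intro ρ i
    exact Finset.sum_pos (fun j _ => hq _) ⟨i, Finset.mem_Ici.mpr le_rfl⟩
  have hQ : 0 < ∏ i : Fin n, q i := Finset.prod_pos fun i _ => hq i
  have hL : ∀ ρ : Equiv.Perm (Fin n),
      L q ρ = (∏ i : Fin n, q i) / ∏ i : Fin n, ∑ j ∈ Ici i, q (ρ j) := by
    intro ρ
    rw [L, Finset.prod_div_distrib, Equiv.prod_comp ρ q]
  -- invariance of sums for i ≠ k'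
  have hsum : ∀ i : Fin n, i ≠ k' →
      ∑ j ∈ Ici i, q ((π * σ) j) = ∑ j ∈ Ici i, q (π j) := by
    intro i hi
    refine Finset.sum_equiv σ ?_ ?_
    · intro j
      simp only [Finset.mem_Ici]
      rcases eq_or_ne j k with hj | hjk
      · rw [hj, hσdef, Equiv.swap_apply_left]
        constructor
        · intro hik; exact le_trans hik (le_of_lt hkk')
        · intro hik'
          have hik'' : (i : ℕ) ≤ (k : ℕ) + 1 := hik'
          have : (i : ℕ) ≠ (k : ℕ) + 1 := fun hc => hi (Fin.ext hc)
          exact Fin.le_def.mpr (by omega)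
      rcases eq_or_ne j k' with hj | hjk'
      · rw [hj, hσdef, Equiv.swap_apply_right]
        constructor
        · intro hik'
          have hik'' : (i : ℕ) ≤ (k : ℕ) + 1 := hik'
          have : (i : ℕ) ≠ (k : ℕ) + 1 := fun hc => hi (Fin.ext hc)
          exact Fin.le_def.mpr (by omega)
        · intro hik; exact le_trans hik (le_of_lt hkk')
      · rw [hσdef, Equiv.swap_apply_of_ne_of_ne hjk hjk']
    · intro j _
      simp [Equiv.Perm.mul_apply]
  -- split off the k' factor
  have hsplit : ∀ ρ : Equiv.Perm (Fin n),
      (∏ i : Fin n, ∑ j ∈ Ici i, q (ρ j)) =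
        (∑ j ∈ Ici k', q (ρ j)) * ∏ i ∈ Finset.univ.erase k', ∑ j ∈ Ici i, q (ρ j) := by
    intro ρ
    exact (Finset.mul_prod_erase Finset.univ _ (Finset.mem_univ k')).symm
  have herase : (∏ i ∈ Finset.univ.erase k', ∑ j ∈ Ici i, q ((π * σ) j)) =
      ∏ i ∈ Finset.univ.erase k', ∑ j ∈ Ici i, q (π j) := by
    refine Finset.prod_congr rfl fun i hi => hsum i (Finset.ne_of_mem_erase hi)
  have hP : 0 < ∏ i ∈ Finset.univ.erase k', ∑ j ∈ Ici i, q (π j) :=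
    Finset.prod_pos fun i _ => hS π i
  -- the k' sums
  have hIci : Ici k' = insert k' (Ioi k') := (Finset.Ioi_insert k').symm
  have hnot : k' ∉ Ioi k' := by simp
  have hfix : ∀ j ∈ Ioi k', σ j = j := by
    intro j hj
    have hj' : k' < j := Finset.mem_Ioi.mp hj
    exact Equiv.swap_apply_of_ne_of_ne (ne_of_gt (lt_trans hkk' hj')) (ne_of_gt hj')
  have hsum1 : ∑ j ∈ Ici k', q ((π * σ) j) = q (π k) + ∑ j ∈ Ioi k', q (π j) := by
    rw [hIci, Finset.sum_insert hnot]
    congr 1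
    · simp [Equiv.Perm.mul_apply, hσdef, Equiv.swap_apply_right]
    · exact Finset.sum_congr rfl fun j hj => by rw [Equiv.Perm.mul_apply, hfix j hj]
  have hsum2 : ∑ j ∈ Ici k', q (π j) = q (π k') + ∑ j ∈ Ioi k', q (π j) := by
    rw [hIci, Finset.sum_insert hnot]
  rw [hL, hL, div_le_div_iff_of_pos_left hQ (Finset.prod_pos fun i _ => hS π i)
    (Finset.prod_pos fun i _ => hS (π * σ) i), hsplit, hsplit, herase,
    mul_le_mul_iff_of_pos_right hP, hsum1, hsum2, add_le_add_iff_right]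
end

section
/- If q and r are vectors of strictly positive reals such that L(q | π) = L(r | π) for every permutation π of {1,…,n} (n ≥ 2), then r is a positive scalar multiple of q. -/
open Finset

lemma L_pos {n : ℕ} (q : Fin n → ℝ) (hq : ∀ i, 0 < q i) (π : Equiv.Perm (Fin n)) :
    0 < L q π := by
  apply Finset.prod_pos
  intro i _
  exact div_pos (hq _) (Finset.sum_pos (fun j _ => hq _) ⟨i, Finset.mem_Ici.mpr le_rfl⟩)

lemma L_eq {n : ℕ} (q : Fin n → ℝ) (π : Equiv.Perm (Fin n)) :
    L q π = (∏ i, q i) / ∏ i, ∑ j ∈ Finset.Ici i, q (π j) := by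
  rw [L, Finset.prod_div_distrib, Equiv.prod_comp]

lemma L_swap {n : ℕ} (q : Fin n → ℝ) (hq : ∀ i, 0 < q i)
    (k m : Fin n) (hk : (k : ℕ) = n - 2) (hm : (m : ℕ) = n - 1) (hn : 2 ≤ n)
    (π : Equiv.Perm (Fin n)) :
    L q ((Equiv.swap k m).trans π) * q (π k) = L q π * q (π m) := by
  have hkm : k ≠ m := by
    intro h; apply_fun (Fin.val) at h; omega
  have hIci : Finset.Ici m = {m} := by
    ext j
    simp only [Finset.mem_Ici, Finset.mem_singleton, Fin.le_def, hm]
    constructor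
    · intro hj; have := j.isLt; exact Fin.ext (by omega)
    · intro hj; subst hj; omega
  -- tail sums agree away from m
  have hT : ∀ i : Fin n, i ≠ m →
      (∑ j ∈ Finset.Ici i, q (π (Equiv.swap k m j))) = ∑ j ∈ Finset.Ici i, q (π j) := by
    intro i hi
    have hik : (i : ℕ) ≤ n - 2 := by
      have := i.isLt
      have : (i : ℕ) ≠ n - 1 := fun hh => hi (Fin.ext (by omega))
      omega
    refine Finset.sum_equiv (Equiv.swap k m) ?_ ?_
    · intro j
      rcases eq_or_ne j k with rfl | hjk
      · simp only [Equiv.swap_apply_left, Finset.mem_Ici, Fin.le_def, hk, hm]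
        omega
      rcases eq_or_ne j m with rfl | hjm
      · simp only [Equiv.swap_apply_right, Finset.mem_Ici, Fin.le_def, hk, hm]
        omega
      · rw [Equiv.swap_apply_of_ne_of_ne hjk hjm]
    · intro j _; rfl
  -- tail sums at m
  have hTm : (∑ j ∈ Finset.Ici m, q (π (Equiv.swap k m j))) = q (π k) := by
    rw [hIci, Finset.sum_singleton, Equiv.swap_apply_right]
  have hTm' : (∑ j ∈ Finset.Ici m, q (π j)) = q (π m) := by
    rw [hIci, Finset.sum_singleton]
  set D : ℝ := ∏ i, ∑ j ∈ Finset.Ici i, q (π j) with hD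
  set D' : ℝ := ∏ i, ∑ j ∈ Finset.Ici i, q (π (Equiv.swap k m j)) with hD'
  have hDpos : 0 < D := Finset.prod_pos (fun i _ =>
    Finset.sum_pos (fun j _ => hq _) ⟨i, Finset.mem_Ici.mpr le_rfl⟩)
  have hD'pos : 0 < D' := Finset.prod_pos (fun i _ =>
    Finset.sum_pos (fun j _ => hq _) ⟨i, Finset.mem_Ici.mpr le_rfl⟩)
  have hF : D' * q (π m) = D * q (π k) := by
    rw [hD, hD', ← Finset.prod_erase_mul _ _ (Finset.mem_univ m),
      ← Finset.prod_erase_mul _ _ (Finset.mem_univ m), hTm, hTm']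
    rw [Finset.prod_congr rfl (fun i hi => hT i (Finset.ne_of_mem_erase hi))]
    ring
  have hL' : L q ((Equiv.swap k m).trans π) = (∏ i, q i) / D' := by
    rw [L_eq]; rfl
  rw [hL', L_eq]
  rw [div_mul_eq_mul_div, div_mul_eq_mul_div, div_eq_div_iff (ne_of_gt hD'pos) (ne_of_gt hDpos)]
  calc (∏ i, q i) * q (π k) * D = (∏ i, q i) * (D * q (π k)) := by ring
    _ = (∏ i, q i) * (D' * q (π m)) := by rw [hF]
    _ = (∏ i, q i) * q (π m) * D' := by ring

theorem likelihood_determines_preferences (n : ℕ) (hn : 2 ≤ n)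
    (q r : Fin n → ℝ) (hq : ∀ i, 0 < q i) (hr : ∀ i, 0 < r i)
    (h : ∀ π : Equiv.Perm (Fin n), L q π = L r π) :
    ∃ c : ℝ, 0 < c ∧ r = c • q := by
  set k : Fin n := ⟨n - 2, by omega⟩ with hk
  set m : Fin n := ⟨n - 1, by omega⟩ with hm
  have hkm : k ≠ m := by
    intro hh; apply_fun Fin.val at hh; simp [hk, hm] at hh; omega
  -- for any distinct a b there is a permutation with π k = a, π m = b
  have hex : ∀ a b : Fin n, a ≠ b → ∃ π : Equiv.Perm (Fin n), π k = a ∧ π m = b := by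
    intro a b hab
    set c : Fin n := Equiv.swap k a b with hc
    have hck : c ≠ k := by
      intro hh
      exact hab ((Equiv.swap k a).injective (hh.trans (Equiv.swap_apply_right k a).symm)).symm
    refine ⟨(Equiv.swap m c).trans (Equiv.swap k a), ?_, ?_⟩
    · simp only [Equiv.trans_apply]
      rw [Equiv.swap_apply_of_ne_of_ne hkm (Ne.symm hck), Equiv.swap_apply_left]
    · simp only [Equiv.trans_apply]
      rw [Equiv.swap_apply_left, hc, Equiv.swap_apply_self]
  -- cross ratios
  have cross : ∀ a b : Fin n, a ≠ b → q a * r b = q b * r a := by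
    intro a b hab
    obtain ⟨π, hπk, hπm⟩ := hex a b hab
    have e1 := L_swap q hq k m rfl rfl hn π
    have e2 := L_swap r hr k m rfl rfl hn π
    rw [← h, ← h] at e2
    rw [hπk, hπm] at e1 e2
    have hpos : L q ((Equiv.swap k m).trans π) ≠ 0 := ne_of_gt (L_pos q hq _)
    have key : L q ((Equiv.swap k m).trans π) * (q a * r b)
        = L q ((Equiv.swap k m).trans π) * (q b * r a) := by
      calc L q ((Equiv.swap k m).trans π) * (q a * r b)
          = (L q ((Equiv.swap k m).trans π) * q a) * r b := by ring
        _ = (L q π * q b) * r b := by rw [e1]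
        _ = (L q π * r b) * q b := by ring
        _ = (L q ((Equiv.swap k m).trans π) * r a) * q b := by rw [← e2]
        _ = L q ((Equiv.swap k m).trans π) * (q b * r a) := by ring
    exact mul_left_cancel₀ hpos key
  -- conclude
  set i0 : Fin n := ⟨0, by omega⟩ with hi0
  refine ⟨r i0 / q i0, div_pos (hr _) (hq _), ?_⟩
  funext a
  simp only [Pi.smul_apply, smul_eq_mul]
  rcases eq_or_ne a i0 with rfl | ha
  · rw [div_mul_cancel₀ _ (ne_of_gt (hq i0))]
  · have := cross i0 a (Ne.symm ha)
    have hqi : q i0 ≠ 0 := ne_of_gt (hq _)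
    field_simp
    linarith [this]
end
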